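/- Let H, D', R, T_g, P_L be real constants with H > 0, D' > 0, T_g > 0, R ≥ 0, P_L ≥ 0, and let f_COI(t) = (P_L/D' + 2·H·R/(T_g·D'^2))·(exp(−D'·t/(2H)) − 1) + (R/(T_g·D'))·t. Then the derivative satisfies f_COI'(t) = R/(T_g·D') − (P_L/(2H) + R/(T_g·D'))·exp(−D'·t/(2H)); in particular f_COI'(0) = −P_L/(2H), and the supremum over t ≥ 0 of |f_COI'(t)| equals max(P_L/(2H), R/(T_g·D')). -/

import Mathlib

theorem stmt_1 (H D' R Tg PL : ℝ) (hH : 0 < H) (hD : 0 < D') (hTg : 0 < Tg)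
    (hR : 0 ≤ R) (hPL : 0 ≤ PL)
    (fCOI : ℝ → ℝ)
    (hf : fCOI = fun t : ℝ =>
      (PL / D' + 2 * H * R / (Tg * D' ^ 2)) * (Real.exp (-D' * t / (2 * H)) - 1)
        + (R / (Tg * D')) * t) :
    (∀ t : ℝ, deriv fCOI t
        = R / (Tg * D') - (PL / (2 * H) + R / (Tg * D')) * Real.exp (-D' * t / (2 * H)))
    ∧ deriv fCOI 0 = -PL / (2 * H)
    ∧ sSup ((fun t => |deriv fCOI t|) '' Set.Ici (0 : ℝ))
        = max (PL / (2 * H)) (R / (Tg * D')) := by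
  subst hf
  set a : ℝ := R / (Tg * D') with ha_def
  set b : ℝ := PL / (2 * H) with hb_def
  have ha : 0 ≤ a := by positivity
  have hb : 0 ≤ b := by positivity
  have hderiv : ∀ t : ℝ, HasDerivAt (fun t : ℝ =>
      (PL / D' + 2 * H * R / (Tg * D' ^ 2)) * (Real.exp (-D' * t / (2 * H)) - 1)
        + (R / (Tg * D')) * t)
      (a - (b + a) * Real.exp (-D' * t / (2 * H))) t := by
    intro t
    have h1 : HasDerivAt (fun t : ℝ => -D' * t / (2 * H)) (-D' / (2 * H)) t := by
      simpa using ((hasDerivAt_id t).const_mul (-D')).div_const (2 * H)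
    have h3 := ((h1.exp.sub_const 1).const_mul (PL / D' + 2 * H * R / (Tg * D' ^ 2)))
    have h4 := (hasDerivAt_id t).const_mul (R / (Tg * D'))
    have h5 := h3.add h4
    refine h5.congr_deriv ?_
    rw [ha_def, hb_def]
    field_simp
    ring
  have hderiv' : ∀ t : ℝ, deriv (fun t : ℝ =>
      (PL / D' + 2 * H * R / (Tg * D' ^ 2)) * (Real.exp (-D' * t / (2 * H)) - 1)
        + (R / (Tg * D')) * t) t = a - (b + a) * Real.exp (-D' * t / (2 * H)) :=
    fun t => (hderiv t).deriv
  refine ⟨fun t => by rw [hderiv' t], ?_, ?_⟩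
  · rw [hderiv' 0]
    simp only [mul_zero, neg_zero, zero_div, Real.exp_zero, mul_one]
    rw [ha_def, hb_def]; ring
  -- sup part
  have himg : (fun t => |deriv (fun t : ℝ =>
      (PL / D' + 2 * H * R / (Tg * D' ^ 2)) * (Real.exp (-D' * t / (2 * H)) - 1)
        + (R / (Tg * D')) * t) t|) '' Set.Ici (0 : ℝ)
      = (fun t => |a - (b + a) * Real.exp (-D' * t / (2 * H))|) '' Set.Ici (0 : ℝ) := by
    apply Set.image_congr
    intro t _
    rw [hderiv' t]
  rw [himg]
  set g : ℝ → ℝ := fun t => |a - (b + a) * Real.exp (-D' * t / (2 * H))| with hg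
  have hbound : ∀ t ∈ Set.Ici (0:ℝ), g t ≤ max b a := by
    intro t ht
    have he0 : 0 < Real.exp (-D' * t / (2 * H)) := Real.exp_pos _
    have ht0 : 0 ≤ t := ht
    have he1 : Real.exp (-D' * t / (2 * H)) ≤ 1 := by
      apply Real.exp_le_one_iff.mpr
      apply div_nonpos_of_nonpos_of_nonneg _ (by positivity)
      nlinarith
    rw [hg, abs_le]
    constructor
    · have : (b + a) * Real.exp (-D' * t / (2 * H)) ≤ (b + a) * 1 := by
        nlinarith
      have hmb : b ≤ max b a := le_max_left _ _
      nlinarith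
    · have : 0 ≤ (b + a) * Real.exp (-D' * t / (2 * H)) := by positivity
      have hma : a ≤ max b a := le_max_right _ _
      nlinarith
  have hne : ((fun t => |a - (b + a) * Real.exp (-D' * t / (2 * H))|) '' Set.Ici (0:ℝ)).Nonempty :=
    ⟨_, ⟨0, Set.self_mem_Ici, rfl⟩⟩
  have hbdd : BddAbove ((fun t => |a - (b + a) * Real.exp (-D' * t / (2 * H))|) '' Set.Ici (0:ℝ)) :=
    ⟨max b a, fun x ⟨t, ht, hx⟩ => hx ▸ hbound t ht⟩
  apply le_antisymm
  · exact csSup_le hne (fun x ⟨t, ht, hx⟩ => hx ▸ hbound t ht)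
  · rw [max_le_iff]
    constructor
    · have h0 : |a - (b + a) * Real.exp (-D' * (0:ℝ) / (2 * H))| ∈
          (fun t => |a - (b + a) * Real.exp (-D' * t / (2 * H))|) '' Set.Ici (0:ℝ) :=
        ⟨0, Set.self_mem_Ici, rfl⟩
      have : |a - (b + a) * Real.exp (-D' * (0:ℝ) / (2 * H))| = b := by
        simp only [mul_zero, neg_zero, zero_div, Real.exp_zero, mul_one]
        rw [abs_of_nonpos (by linarith)]; ring
      rw [← this]
      exact le_csSup hbdd h0
    · -- a is the limit as t → ∞
      have htend : Filter.Tendsto (fun t : ℝ => |a - (b + a) * Real.exp (-D' * t / (2 * H))|)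
          Filter.atTop (nhds a) := by
        have heq : (fun t : ℝ => -D' * t / (2 * H)) = fun t : ℝ => -(D' / (2 * H) * t) := by
          funext t; ring
        have h1 : Filter.Tendsto (fun t : ℝ => -D' * t / (2 * H)) Filter.atTop Filter.atBot := by
          rw [heq]
          exact Filter.tendsto_neg_atTop_atBot.comp
            (Filter.Tendsto.const_mul_atTop (by positivity) Filter.tendsto_id)
        have h2 : Filter.Tendsto (fun t : ℝ => Real.exp (-D' * t / (2 * H)))
            Filter.atTop (nhds 0) := Real.tendsto_exp_atBot.comp h1
        have h3 : Filter.Tendsto (fun t : ℝ => a - (b + a) * Real.exp (-D' * t / (2 * H)))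
            Filter.atTop (nhds (a - (b + a) * 0)) :=
          Filter.Tendsto.sub tendsto_const_nhds (h2.const_mul _)
        have := h3.abs
        simpa [abs_of_nonneg ha] using this
      apply le_of_tendsto htend
      filter_upwards [Filter.eventually_ge_atTop (0:ℝ)] with t ht
      exact le_csSup hbdd ⟨t, ht, rfl⟩
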